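/- If R is a symmetric irreflexive collusive relation, then R admits no cycle of odd length: there is no sequence x₀, x₁, ..., x_{2n+1} with x₀ = x_{2n+1}, consecutive elements R-related. -/

import Mathlib

lemma aux_no_odd_walk {X : Type*} (R : X → X → Prop)
    (hsym : ∀ x y, R x y → R y x)
    (hirr : ∀ x, ¬ R x x)
    (hcol : ∀ x y z w, R x y → R x z → R w y → R w z) :
    ∀ m : ℕ, Odd m → ∀ c : ℕ → X, c 0 = c m → (∀ i < m, R (c i) (c (i+1))) → False := by
  intro m
  induction m using Nat.strong_induction_on with
  | _ m ih =>
    intro hodd c h0 hedge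
    rcases Nat.lt_or_ge m 3 with hm | hm
    · interval_cases m
      · exact (Nat.not_odd_zero) hodd
      · have := hedge 0 (by omega)
        rw [h0] at this
        exact hirr _ this
      · simp [Nat.odd_iff] at hodd
    · have h03 : R (c 0) (c 3) := by
        have e0 := hedge 0 (by omega)
        have e1 := hedge 1 (by omega)
        have e2 := hedge 2 (by omega)
        exact hsym _ _ (hcol (c 1) (c 2) (c 0) (c 3) e1 (hsym _ _ e0) (hsym _ _ e2))
      set d : ℕ → X := fun i => if i = 0 then c 0 else c (i+2) with hd
      apply ih (m - 2) (by omega) (by rcases hodd with ⟨k, hk⟩; exact ⟨k - 1, by omega⟩) d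
      · have h1 : ¬ (m - 2 = 0) := by omega
        simp only [hd, if_pos rfl, if_neg h1]
        rw [show m - 2 + 2 = m by omega]
        exact h0
      · intro i hi
        rcases Nat.eq_zero_or_pos i with rfl | hpos
        · simpa [hd] using h03
        · have h1 : ¬ (i = 0) := by omega
          have h2 : ¬ (i + 1 = 0) := by omega
          simp only [hd, if_neg h1, if_neg h2]
          rw [show i + 1 + 2 = (i + 2) + 1 by omega]
          exact hedge (i + 2) (by omega)

theorem stmt_13 {X : Type*} (R : X → X → Prop)
    (hsym : ∀ x y, R x y → R y x)
    (hirr : ∀ x, ¬ R x x)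
    (hcol : ∀ x y z w, R x y → R x z → R w y → R w z) :
    ∀ n : ℕ, ¬ ∃ c : Fin (2 * n + 1 + 1) → X,
      c 0 = c (Fin.last (2 * n + 1)) ∧
      ∀ i : Fin (2 * n + 1), R (c i.castSucc) (c i.succ) := by
  rintro n ⟨c, h0, hedge⟩
  set g : ℕ → X := fun i => if h : i < 2 * n + 1 + 1 then c ⟨i, h⟩ else c 0 with hg
  refine aux_no_odd_walk R hsym hirr hcol (2 * n + 1) ⟨n, by ring⟩ g ?_ ?_
  · have h1 : (0 : ℕ) < 2 * n + 1 + 1 := by omega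
    have h2 : 2 * n + 1 < 2 * n + 1 + 1 := by omega
    simp only [hg, dif_pos h1, dif_pos h2]
    convert h0 using 2 <;> simp [Fin.ext_iff]
  · intro i hi
    have h1 : i < 2 * n + 1 + 1 := by omega
    have h2 : i + 1 < 2 * n + 1 + 1 := by omega
    simp only [hg, dif_pos h1, dif_pos h2]
    exact hedge ⟨i, hi⟩
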